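/- Define the Lebesgue bracket ⟨v,I⟩ = √(1 + |v|²/2 + I/m) and E = (m/4)|v−v*|² + I + I*. Then for every ζ ∈ (0,2], the lower bound L·⟨v,I⟩^ζ − ⟨v*,I*⟩^ζ ≤ (E/m)^{ζ/2} holds with L = 2^{−ζ}·min{1, 2^{1−ζ}}. -/

import Mathlib

lemma rpow_add_le_add_rpow_real (x y p : ℝ) (hx : 0 ≤ x) (hy : 0 ≤ y)
    (hp : 0 ≤ p) (hp1 : p ≤ 1) : (x + y) ^ p ≤ x ^ p + y ^ p := by
  have h := NNReal.rpow_add_le_add_rpow x.toNNReal y.toNNReal hp hp1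
  have h' := NNReal.coe_le_coe.2 h
  rwa [NNReal.coe_add, NNReal.coe_rpow, NNReal.coe_rpow, NNReal.coe_rpow, NNReal.coe_add,
    Real.coe_toNNReal _ hx, Real.coe_toNNReal _ hy] at h'

theorem energy_lower_bound
    (m : ℝ) (hm : 0 < m)
    (v vs : EuclideanSpace ℝ (Fin 3)) (I Is : ℝ) (hI : 0 ≤ I) (hIs : 0 ≤ Is)
    (ζ : ℝ) (hζ : ζ ∈ Set.Ioc (0:ℝ) 2)
    (E : ℝ) (hE : E = m / 4 * ‖v - vs‖ ^ 2 + I + Is)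
    (L : ℝ) (hL : L = 2 ^ (-ζ) * min 1 (2 ^ (1 - ζ))) :
    L * Real.sqrt (1 + ‖v‖ ^ 2 / 2 + I / m) ^ ζ
        - Real.sqrt (1 + ‖vs‖ ^ 2 / 2 + Is / m) ^ ζ
      ≤ (E / m) ^ (ζ / 2) := by
  obtain ⟨hζ0, hζ2⟩ := hζ
  set a := 1 + ‖v‖ ^ 2 / 2 + I / m with ha_def
  set b := 1 + ‖vs‖ ^ 2 / 2 + Is / m with hb_def
  set e := E / m with he_def
  have hIm : 0 ≤ I / m := div_nonneg hI hm.le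
  have hIsm : 0 ≤ Is / m := div_nonneg hIs hm.le
  have ha : 0 ≤ a := by positivity
  have hb : 0 ≤ b := by positivity
  have he : 0 ≤ e := by rw [he_def, hE]; positivity
  -- key: a ≤ 4 * (e + b)
  have hkey : a ≤ 4 * (e + b) := by
    have htri : ‖v‖ ≤ ‖v - vs‖ + ‖vs‖ := by
      simpa using norm_add_le (v - vs) vs
    have hsq : ‖v‖ ^ 2 ≤ 2 * ‖v - vs‖ ^ 2 + 2 * ‖vs‖ ^ 2 := by
      nlinarith [htri, sq_nonneg (‖v - vs‖ - ‖vs‖), norm_nonneg v, norm_nonneg (v - vs), norm_nonneg vs]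
    have heE : e = ‖v - vs‖ ^ 2 / 4 + I / m + Is / m := by
      rw [he_def, hE]; field_simp
    rw [ha_def, heE, hb_def]
    nlinarith [norm_nonneg vs, sq_nonneg ‖vs‖]
  have hsa : Real.sqrt a ^ ζ = a ^ (ζ / 2) := by
    rw [Real.sqrt_eq_rpow, ← Real.rpow_mul ha, show (1:ℝ)/2*ζ = ζ/2 by ring]
  have hsb : Real.sqrt b ^ ζ = b ^ (ζ / 2) := by
    rw [Real.sqrt_eq_rpow, ← Real.rpow_mul hb, show (1:ℝ)/2*ζ = ζ/2 by ring]
  rw [hsa, hsb]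
  have hp0 : 0 ≤ ζ / 2 := by linarith
  have h1 : a ^ (ζ / 2) ≤ (4 * (e + b)) ^ (ζ / 2) :=
    Real.rpow_le_rpow ha hkey hp0
  have h4 : (4 : ℝ) = (2 : ℝ) ^ (2 : ℝ) := by
    rw [show (2:ℝ) = ((2:ℕ):ℝ) by norm_num, Real.rpow_natCast]; norm_num
  have h2 : (4 * (e + b)) ^ (ζ / 2) = 2 ^ ζ * (e + b) ^ (ζ / 2) := by
    rw [Real.mul_rpow (by norm_num) (by linarith), h4, ← Real.rpow_mul (by norm_num),
      show (2:ℝ)*(ζ/2) = ζ by ring]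
  have h3 : (e + b) ^ (ζ / 2) ≤ e ^ (ζ / 2) + b ^ (ζ / 2) :=
    rpow_add_le_add_rpow_real e b (ζ / 2) he hb hp0 (by linarith)
  have hL0 : 0 ≤ L := by
    rw [hL]
    have : (0:ℝ) < min 1 (2 ^ (1 - ζ)) :=
      lt_min one_pos (Real.rpow_pos_of_pos two_pos _)
    positivity
  have hLle : L ≤ 2 ^ (-ζ) := by
    rw [hL]
    calc (2:ℝ) ^ (-ζ) * min 1 (2 ^ (1 - ζ)) ≤ 2 ^ (-ζ) * 1 := by
          exact mul_le_mul_of_nonneg_left (min_le_left _ _) (Real.rpow_pos_of_pos two_pos _).le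
      _ = 2 ^ (-ζ) := mul_one _
  have hcancel : (2:ℝ) ^ (-ζ) * 2 ^ ζ = 1 := by
    rw [← Real.rpow_add two_pos]; norm_num
  have hchain : L * a ^ (ζ / 2) ≤ 2 ^ (-ζ) * (2 ^ ζ * (e + b) ^ (ζ / 2)) := by
    rw [← h2]
    exact mul_le_mul hLle h1 (Real.rpow_nonneg ha _) (Real.rpow_pos_of_pos two_pos _).le
  rw [← mul_assoc, hcancel, one_mul] at hchain
  linarith
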